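/- arXiv:2111.00587 — 3 statements merged into one kernel-verified Lean document; each statement's English description precedes it below -/
import Mathlib

section
/- (Existence of the t-SVDM for order-p tensors.) Fix invertible matrices M₃ ∈ ℝ^{n₃×n₃},…,M_p ∈ ℝ^{n_p×n_p}. Every order-p real tensor A ∈ ℝ^{n₁×n₂×⋯×n_p} admits a factorization A = U ⋆M S ⋆M Vᵀ in which U ∈ ℝ^{n₁×n₁×n₃×⋯×n_p} and V ∈ ℝ^{n₂×n₂×n₃×⋯×n_p} are ⋆M-orthogonal and S ∈ ℝ^{n₁×n₂×n₃×⋯×n_p} is f-diagonal, with every frontal slice of Ŝ a diagonal matrix whose diagonal entries are nonnegative and arranged in descending order. -/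
open Matrix

/-!
Order-`p` real tensors (`p = q + 2`) are represented as families of frontal
slices: a tensor `A ∈ ℝ^{n₁ × n₂ × n₃ × ⋯ × n_p}` is a function
`A : TI m → Matrix (Fin n₁) (Fin n₂) ℝ`, where `TI m = ∀ k : Fin q, Fin (m k)`
is the trailing multi-index `(i₃, …, i_p)` and `A i` is the frontal slice
`A(:,:,i₃,…,i_p)`.
-/

namespace TSVDM

variable {q : ℕ} {m : Fin q → ℕ}

/-- Trailing multi-index `(i₃, …, i_p)`. -/
abbrev TI (m : Fin q → ℕ) : Type := ∀ k, Fin (m k)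

/-- Transform-domain tensor `Â = A ×₃ M₃ ×₄ M₄ ⋯ ×_p M_p`
(mode-`k` products along all trailing modes). -/
noncomputable def hat (M : ∀ k, Matrix (Fin (m k)) (Fin (m k)) ℝ) {a b : Type}
    (A : TI m → Matrix a b ℝ) : TI m → Matrix a b ℝ :=
  fun i => ∑ j : TI m, (∏ k, M k (i k) (j k)) • A j

/-- Inverse transform `×₃ M₃⁻¹ ×₄ M₄⁻¹ ⋯ ×_p M_p⁻¹`. -/
noncomputable def unhat (M : ∀ k, Matrix (Fin (m k)) (Fin (m k)) ℝ) {a b : Type}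
    (A : TI m → Matrix a b ℝ) : TI m → Matrix a b ℝ :=
  fun i => ∑ j : TI m, (∏ k, (M k)⁻¹ (i k) (j k)) • A j

/-- The `⋆M`-product: `A ⋆M B = (Â △ B̂) ×₃ M₃⁻¹ ⋯ ×_p M_p⁻¹`, where `△` is the
facewise product (slice-wise matrix multiplication). -/
noncomputable def starM (M : ∀ k, Matrix (Fin (m k)) (Fin (m k)) ℝ)
    {a b c : Type} [Fintype b]
    (A : TI m → Matrix a b ℝ) (B : TI m → Matrix b c ℝ) : TI m → Matrix a c ℝ :=
  unhat M (fun i => hat M A i * hat M B i)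

/-- The `⋆M`-transpose: transpose every transform-domain frontal slice. -/
noncomputable def transM (M : ∀ k, Matrix (Fin (m k)) (Fin (m k)) ℝ) {a b : Type}
    (A : TI m → Matrix a b ℝ) : TI m → Matrix b a ℝ :=
  unhat M (fun i => (hat M A i)ᵀ)

/-- The `⋆M`-identity: all transform-domain frontal slices equal the identity matrix. -/
noncomputable def idM (M : ∀ k, Matrix (Fin (m k)) (Fin (m k)) ℝ)
    (a : Type) [DecidableEq a] : TI m → Matrix a a ℝ :=
  unhat M (fun _ => (1 : Matrix a a ℝ))

/-- `Q` is `⋆M`-orthogonal if `Qᵀ ⋆M Q = Q ⋆M Qᵀ = I`. -/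
def IsStarMOrthogonal (M : ∀ k, Matrix (Fin (m k)) (Fin (m k)) ℝ)
    {a : Type} [Fintype a] [DecidableEq a] (Q : TI m → Matrix a a ℝ) : Prop :=
  starM M (transM M Q) Q = idM M a ∧ starM M Q (transM M Q) = idM M a

/-- Frobenius norm of a tensor. -/
noncomputable def frob {a b : Type} [Fintype a] [Fintype b]
    (A : TI m → Matrix a b ℝ) : ℝ :=
  Real.sqrt (∑ i : TI m, ∑ r : a, ∑ c : b, A i r c ^ 2)

/-- Diagonal position `(j, j)`: row index. -/
def dIdx₁ {n₁ n₂ : ℕ} (j : Fin (min n₁ n₂)) : Fin n₁ :=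
  ⟨j.1, lt_of_lt_of_le j.2 (Nat.min_le_left n₁ n₂)⟩

/-- Diagonal position `(j, j)`: column index. -/
def dIdx₂ {n₁ n₂ : ℕ} (j : Fin (min n₁ n₂)) : Fin n₂ :=
  ⟨j.1, lt_of_lt_of_le j.2 (Nat.min_le_right n₁ n₂)⟩

/-- `A = U ⋆M S ⋆M Vᵀ` is a t-SVDM of `A`: `U`, `V` are `⋆M`-orthogonal, `S` is
f-diagonal (each transform-domain frontal slice is diagonal), and the diagonal
entries of each frontal slice of `Ŝ` are nonnegative and in descending order. -/
structure IsTSVDM (M : ∀ k, Matrix (Fin (m k)) (Fin (m k)) ℝ) {n₁ n₂ : ℕ}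
    (A : TI m → Matrix (Fin n₁) (Fin n₂) ℝ)
    (U : TI m → Matrix (Fin n₁) (Fin n₁) ℝ)
    (S : TI m → Matrix (Fin n₁) (Fin n₂) ℝ)
    (V : TI m → Matrix (Fin n₂) (Fin n₂) ℝ) : Prop where
  decomp : A = starM M (starM M U S) (transM M V)
  orthU : IsStarMOrthogonal M U
  orthV : IsStarMOrthogonal M V
  fdiag : ∀ (i : TI m) (a : Fin n₁) (b : Fin n₂), (a : ℕ) ≠ (b : ℕ) → hat M S i a b = 0
  nonneg : ∀ (i : TI m) (j : Fin (min n₁ n₂)), 0 ≤ hat M S i (dIdx₁ j) (dIdx₂ j)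
  descend : ∀ (i : TI m) (j j' : Fin (min n₁ n₂)), j ≤ j' →
    hat M S i (dIdx₁ j') (dIdx₂ j') ≤ hat M S i (dIdx₁ j) (dIdx₂ j)

/-- The `(j,j)`-singular tube of `S`, as a function of the trailing multi-index. -/
def tube {n₁ n₂ : ℕ} (S : TI m → Matrix (Fin n₁) (Fin n₂) ℝ)
    (j : Fin (min n₁ n₂)) : TI m → ℝ :=
  fun i => S i (dIdx₁ j) (dIdx₂ j)

/-- Frobenius norm of the `(j,j)`-singular tube of `S`. -/
noncomputable def tubeNorm {n₁ n₂ : ℕ} (S : TI m → Matrix (Fin n₁) (Fin n₂) ℝ)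
    (j : Fin (min n₁ n₂)) : ℝ :=
  Real.sqrt (∑ i : TI m, tube S j i ^ 2)

/-- `r` is the t-rank: the number of nonzero singular tubes (tubes `s₁,…,s_r`
are nonzero and the remaining ones vanish). -/
def HasTRank {n₁ n₂ : ℕ} (S : TI m → Matrix (Fin n₁) (Fin n₂) ℝ) (r : ℕ) : Prop :=
  ∀ j : Fin (min n₁ n₂), ((j : ℕ) < r ↔ tube S j ≠ 0)

/-- Keep only the first `k` lateral slices (columns of each frontal slice). -/
def truncCols {n k : ℕ} (hk : k ≤ n) {a : Type}
    (U : TI m → Matrix a (Fin n) ℝ) : TI m → Matrix a (Fin k) ℝ :=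
  fun i => Matrix.of fun r c => U i r (Fin.castLE hk c)

/-- Keep only the leading `k × k` block of each frontal slice. -/
def truncBlock {n₁ n₂ k : ℕ} (h₁ : k ≤ n₁) (h₂ : k ≤ n₂)
    (S : TI m → Matrix (Fin n₁) (Fin n₂) ℝ) : TI m → Matrix (Fin k) (Fin k) ℝ :=
  fun i => Matrix.of fun a b => S i (Fin.castLE h₁ a) (Fin.castLE h₂ b)

/-- The t-rank-`k` truncation `A_k = U_k ⋆M S_k ⋆M V_kᵀ`. -/
noncomputable def truncApprox (M : ∀ k, Matrix (Fin (m k)) (Fin (m k)) ℝ)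
    {n₁ n₂ : ℕ} (U : TI m → Matrix (Fin n₁) (Fin n₁) ℝ)
    (S : TI m → Matrix (Fin n₁) (Fin n₂) ℝ)
    (V : TI m → Matrix (Fin n₂) (Fin n₂) ℝ) (k : ℕ) (hk : k ≤ min n₁ n₂) :
    TI m → Matrix (Fin n₁) (Fin n₂) ℝ :=
  starM M
    (starM M (truncCols (le_trans hk (Nat.min_le_left _ _)) U)
      (truncBlock (le_trans hk (Nat.min_le_left _ _)) (le_trans hk (Nat.min_le_right _ _)) S))
    (transM M (truncCols (le_trans hk (Nat.min_le_right _ _)) V))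

/-- The `j`-th lateral slice `A(:,j,:,…,:)`, as an `n₁ × 1 × n₃ × ⋯ × n_p` tensor. -/
def lateral {n₁ n₂ : ℕ} (A : TI m → Matrix (Fin n₁) (Fin n₂) ℝ) (j : Fin n₂) :
    TI m → Matrix (Fin n₁) (Fin 1) ℝ :=
  fun i => Matrix.of fun r _ => A i r j

/-- The `(j,j)`-singular tube of `S` regarded as a `1 × 1 × n₃ × ⋯ × n_p` tensor. -/
def tubeT {n₁ n₂ : ℕ} (S : TI m → Matrix (Fin n₁) (Fin n₂) ℝ)
    (j : Fin (min n₁ n₂)) : TI m → Matrix (Fin 1) (Fin 1) ℝ :=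
  fun i => Matrix.of fun _ _ => S i (dIdx₁ j) (dIdx₂ j)


lemma key_sum (N P : ∀ k, Matrix (Fin (m k)) (Fin (m k)) ℝ)
    (hNP : ∀ k, N k * P k = 1) (i l : TI m) :
    ∑ j : TI m, (∏ k, N k (i k) (j k)) * (∏ k, P k (j k) (l k))
      = if i = l then 1 else 0 := by
  have : ∀ j : TI m, (∏ k, N k (i k) (j k)) * (∏ k, P k (j k) (l k))
      = ∏ k, (N k (i k) (j k) * P k (j k) (l k)) := by
    intro j; rw [Finset.prod_mul_distrib]
  simp_rw [this]
  rw [← Fintype.prod_sum fun k t => N k (i k) t * P k t (l k)]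
  have : ∀ k, ∑ t, N k (i k) t * P k t (l k) = if i k = l k then 1 else 0 := by
    intro k
    have := congrFun (congrFun (hNP k) (i k)) (l k)
    simpa [Matrix.mul_apply, Matrix.one_apply] using this
  simp_rw [this]
  by_cases h : i = l
  · simp [h]
  · obtain ⟨k, hk⟩ := Function.ne_iff.mp h
    rw [if_neg h]
    exact Finset.prod_eq_zero (Finset.mem_univ k) (by simp [hk])

lemma comp_sum (N P : ∀ k, Matrix (Fin (m k)) (Fin (m k)) ℝ)
    (hNP : ∀ k, N k * P k = 1) {a b : Type}
    (X : TI m → Matrix a b ℝ) (i : TI m) :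
    (∑ j : TI m, (∏ k, N k (i k) (j k)) •
      ∑ l : TI m, (∏ k, P k (j k) (l k)) • X l) = X i := by
  simp_rw [Finset.smul_sum, smul_smul]
  rw [Finset.sum_comm]
  simp_rw [← Finset.sum_smul, key_sum N P hNP]
  simp


lemma matrix_svd {n₁ n₂ : ℕ} (B : Matrix (Fin n₁) (Fin n₂) ℝ) :
    ∃ (U : Matrix (Fin n₁) (Fin n₁) ℝ) (S : Matrix (Fin n₁) (Fin n₂) ℝ)
      (V : Matrix (Fin n₂) (Fin n₂) ℝ),
      Uᵀ * U = 1 ∧ U * Uᵀ = 1 ∧ Vᵀ * V = 1 ∧ V * Vᵀ = 1 ∧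
      B = U * S * Vᵀ ∧
      (∀ (a : Fin n₁) (b : Fin n₂), (a : ℕ) ≠ (b : ℕ) → S a b = 0) ∧
      (∀ j : Fin (min n₁ n₂), 0 ≤ S (dIdx₁ j) (dIdx₂ j)) ∧
      (∀ j j' : Fin (min n₁ n₂), j ≤ j' →
        S (dIdx₁ j') (dIdx₂ j') ≤ S (dIdx₁ j) (dIdx₂ j)) := by
  classical
  have hGpsd : (Bᵀ * B).PosSemidef := by
    simpa [Matrix.conjTranspose_eq_transpose_of_trivial] using
      Matrix.posSemidef_conjTranspose_mul_self B
  set G := Bᵀ * B with hGdef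
  have hG : G.IsHermitian := hGpsd.1
  set σ : Equiv.Perm (Fin n₂) := Tuple.sort (fun j => -hG.eigenvalues j) with hσ
  set lam : Fin n₂ → ℝ := fun j => hG.eigenvalues (σ j) with hlam
  have lam_nonneg : ∀ j, 0 ≤ lam j := fun j => hGpsd.eigenvalues_nonneg _
  have lam_anti : ∀ j j' : Fin n₂, j ≤ j' → lam j' ≤ lam j := by
    intro j j' h
    have := Tuple.monotone_sort (fun j => -hG.eigenvalues j) h
    simpa [hlam] using this
  set w : Fin n₂ → EuclideanSpace ℝ (Fin n₂) := fun j => hG.eigenvectorBasis (σ j) with hw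
  have worth : ∀ j k, (w j : Fin n₂ → ℝ) ⬝ᵥ (w k : Fin n₂ → ℝ) = if j = k then 1 else 0 := by
    intro j k
    have h1 := (orthonormal_iff_ite (𝕜 := ℝ)).mp hG.eigenvectorBasis.orthonormal (σ j) (σ k)
    rw [PiLp.inner_apply] at h1
    simpa [dotProduct, EquivLike.apply_eq_iff_eq, hw, mul_comm] using h1
  have hGw : ∀ j, G *ᵥ (w j : Fin n₂ → ℝ) = lam j • (w j : Fin n₂ → ℝ) := fun j =>
    hG.mulVec_eigenvectorBasis (σ j)
  set c : Fin n₂ → (Fin n₁ → ℝ) := fun j => B *ᵥ (w j : Fin n₂ → ℝ) with hc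
  have hcc : ∀ j k, c j ⬝ᵥ c k = if j = k then lam j else 0 := by
    intro j k
    have : c j ⬝ᵥ c k = (G *ᵥ (w j : Fin n₂ → ℝ)) ⬝ᵥ (w k : Fin n₂ → ℝ) := by
      rw [hGdef, ← Matrix.mulVec_mulVec, Matrix.mulVec_transpose,
        ← Matrix.dotProduct_mulVec]
    rw [this, hGw j, smul_dotProduct, worth j k]
    simp [mul_ite]
  -- rank bound: nonzero lam indices are < n₁
  have hzero : ∀ j : Fin n₂, lam j ≠ 0 → (j : ℕ) < n₁ := by
    intro j hj
    have hcard : Fintype.card {k : Fin n₂ // lam k ≠ 0} ≤ n₁ := by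
      have e : {k : Fin n₂ // lam k ≠ 0} ≃ {k : Fin n₂ // hG.eigenvalues k ≠ 0} :=
        Equiv.subtypeEquiv σ (fun a => Iff.rfl)
      rw [Fintype.card_congr e, ← hG.rank_eq_card_non_zero_eigs]
      calc G.rank = B.rank := Matrix.rank_transpose_mul_self B
        _ ≤ Fintype.card (Fin n₁) := B.rank_le_card_height
        _ = n₁ := Fintype.card_fin n₁
    have hsub : Finset.Iic j ⊆ Finset.filter (fun k => lam k ≠ 0) Finset.univ := by
      intro i hi
      simp only [Finset.mem_Iic] at hi
      simp only [Finset.mem_filter, Finset.mem_univ, true_and]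
      intro h0
      exact hj (le_antisymm (h0 ▸ lam_anti i j hi) (lam_nonneg j))
    have h1 : (j : ℕ) + 1 ≤ (Finset.filter (fun k => lam k ≠ 0) Finset.univ).card := by
      calc (j : ℕ) + 1 = (Finset.Iic j).card := (Fin.card_Iic j).symm
        _ ≤ _ := Finset.card_le_card hsub
    have h2 : (Finset.filter (fun k => lam k ≠ 0) Finset.univ).card
        = Fintype.card {k : Fin n₂ // lam k ≠ 0} := (Fintype.card_subtype _).symm
    omega
  -- columns with lam = 0 vanish
  have czero : ∀ j, lam j = 0 → c j = 0 := by
    intro j h0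
    have hsum : ∑ r, c j r * c j r = 0 := by
      have := hcc j j
      simp only [if_pos rfl, h0] at this
      exact this
    funext r
    have := (Finset.sum_eq_zero_iff_of_nonneg
      (fun r _ => mul_self_nonneg (c j r))).mp hsum r (Finset.mem_univ r)
    exact mul_self_eq_zero.mp this
  -- build orthonormal family to extend
  set sv : Fin n₂ → ℝ := fun j => Real.sqrt (lam j) with hsv
  set sset : Set (Fin n₁) := {a | ∃ h : (a : ℕ) < n₂, lam ⟨a.1, h⟩ ≠ 0} with hsset
  set v : Fin n₁ → EuclideanSpace ℝ (Fin n₁) := fun a =>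
    if h : (a : ℕ) < n₂ then (sv ⟨a.1, h⟩)⁻¹ • WithLp.toLp 2 (c ⟨a.1, h⟩)
    else 0 with hv
  have hvon : Orthonormal ℝ (sset.restrict v) := by
    rw [orthonormal_iff_ite]
    rintro ⟨a, ha, hla⟩ ⟨b, hb, hlb⟩
    have hva : v a = (sv ⟨a.1, ha⟩)⁻¹ • WithLp.toLp 2 (c ⟨a.1, ha⟩) := by
      rw [hv]; exact dif_pos ha
    have hvb : v b = (sv ⟨b.1, hb⟩)⁻¹ • WithLp.toLp 2 (c ⟨b.1, hb⟩) := by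
      rw [hv]; exact dif_pos hb
    show inner ℝ (v a) (v b) = _
    simp only [Set.restrict_apply, hva, hvb, inner_smul_left, inner_smul_right]
    have hinner : ∀ x y : EuclideanSpace ℝ (Fin n₁), (inner ℝ x y : ℝ) = (x : Fin n₁ → ℝ) ⬝ᵥ (y : Fin n₁ → ℝ) := by
      intro x y; rw [PiLp.inner_apply]; simp [dotProduct, mul_comm]
    rw [hinner, hcc]
    by_cases hab : a = b
    · subst hab
      have hpos : 0 < lam ⟨a.1, ha⟩ := lt_of_le_of_ne (lam_nonneg _) (Ne.symm hla)
      have hs : sv ⟨a.1, ha⟩ * sv ⟨a.1, ha⟩ = lam ⟨a.1, ha⟩ := Real.mul_self_sqrt hpos.le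
      have hsne : sv ⟨a.1, ha⟩ ≠ 0 := by
        rw [hsv]; exact (Real.sqrt_pos.mpr hpos).ne'
      have hfn : (⟨a.1, hb⟩ : Fin n₂) = ⟨a.1, ha⟩ := rfl
      simp only [hfn, if_pos rfl, if_true, starRingEnd_apply, star_trivial]
      field_simp
      linarith [hs]
    · have h1 : (⟨a.1, ha⟩ : Fin n₂) ≠ ⟨b.1, hb⟩ := by
        intro h
        have h2 : (a : ℕ) = (b : ℕ) := Fin.mk.inj_iff.mp h
        exact hab (Fin.ext h2)
      simp [h1, Subtype.ext_iff, hab]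
  obtain ⟨bb, hbb⟩ := hvon.exists_orthonormalBasis_extension_of_card_eq
    (by simp) 
  have hinner : ∀ x y : EuclideanSpace ℝ (Fin n₁), (inner ℝ x y : ℝ)
      = (x : Fin n₁ → ℝ) ⬝ᵥ (y : Fin n₁ → ℝ) := by
    intro x y; rw [PiLp.inner_apply]; simp [dotProduct, mul_comm]
  set U : Matrix (Fin n₁) (Fin n₁) ℝ := Matrix.of (fun r a => bb a r) with hU
  set V : Matrix (Fin n₂) (Fin n₂) ℝ := Matrix.of (fun j k => w k j) with hV
  set S : Matrix (Fin n₁) (Fin n₂) ℝ :=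
    Matrix.of (fun a b => if (a : ℕ) = (b : ℕ) then sv b else 0) with hS
  have hUtU : Uᵀ * U = 1 := by
    ext a a'
    have h1 := (orthonormal_iff_ite (𝕜 := ℝ)).mp bb.orthonormal a a'
    rw [hinner] at h1
    simpa [Matrix.mul_apply, hU, Matrix.one_apply, dotProduct] using h1
  have hUUt : U * Uᵀ = 1 := mul_eq_one_comm.mp hUtU
  have hVtV : Vᵀ * V = 1 := by
    ext k k'
    have h1 := worth k k'
    simpa [Matrix.mul_apply, hV, Matrix.one_apply, dotProduct, eq_comm] using h1
  have hVVt : V * Vᵀ = 1 := mul_eq_one_comm.mp hVtV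
  have hsvz : ∀ j, lam j = 0 → sv j = 0 := by
    intro j h; rw [hsv]; simp [h]
  have hsvnz : ∀ j, lam j ≠ 0 → sv j ≠ 0 := by
    intro j h
    exact (Real.sqrt_pos.mpr (lt_of_le_of_ne (lam_nonneg j) (Ne.symm h))).ne'
  have hBV : U * S = B * V := by
    ext r j
    have hBVa : (B * V) r j = c j r := by
      simp [Matrix.mul_apply, hV, hc, Matrix.mulVec, dotProduct]
    rw [hBVa]
    by_cases hn : (j : ℕ) < n₁
    · have hScol : ∀ a : Fin n₁, S a j = if a = ⟨j.1, hn⟩ then sv j else 0 := by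
        intro a
        by_cases h : a = ⟨j.1, hn⟩
        · subst h; simp [hS]
        · have : (a : ℕ) ≠ (j : ℕ) := fun hv => h (Fin.ext hv)
          simp [hS, this, h]
      have hcol : (U * S) r j = U r ⟨j.1, hn⟩ * sv j := by
        rw [Matrix.mul_apply]
        simp_rw [hScol, mul_ite, mul_zero]
        rw [Finset.sum_ite_eq' Finset.univ (⟨j.1, hn⟩ : Fin n₁) (fun a => U r a * sv j)]
        simp
      rw [hcol]
      by_cases hl : lam j = 0
      · rw [czero j hl, hsvz j hl]
        simp
      · have hmem : (⟨j.1, hn⟩ : Fin n₁) ∈ sset := by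
          refine ⟨j.2, ?_⟩
          have : (⟨j.1, j.2⟩ : Fin n₂) = j := Fin.eta j j.2
          rw [this]; exact hl
        have hUv : U r ⟨j.1, hn⟩ = (sv j)⁻¹ * c j r := by
          have h2 := hbb _ hmem
          have h3 : v ⟨j.1, hn⟩ = (sv j)⁻¹ • WithLp.toLp 2 (c j) := by
            rw [hv]
            beta_reduce
            rw [dif_pos (show ((⟨j.1, hn⟩ : Fin n₁) : ℕ) < n₂ from j.2)]
          rw [hU]
          show bb ⟨j.1, hn⟩ r = (sv j)⁻¹ * c j r
          rw [h2, h3]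
          rfl
        rw [hUv]
        field_simp [hsvnz j hl]
    · have hl : lam j = 0 := by
        by_contra h; exact hn (hzero j h)
      rw [czero j hl]
      rw [Matrix.mul_apply]
      have : ∀ a : Fin n₁, S a j = 0 := by
        intro a
        have : (a : ℕ) ≠ (j : ℕ) := by omega
        simp [hS, this]
      simp [this]
  refine ⟨U, S, V, hUtU, hUUt, hVtV, hVVt, ?_, ?_, ?_, ?_⟩
  · calc B = B * (V * Vᵀ) := by rw [hVVt, Matrix.mul_one]
      _ = (B * V) * Vᵀ := by rw [Matrix.mul_assoc]
      _ = U * S * Vᵀ := by rw [hBV]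
  · intro a b hab
    simp [hS, hab]
  · intro j
    have : ((dIdx₁ j : Fin n₁) : ℕ) = ((dIdx₂ j : Fin n₂) : ℕ) := rfl
    simp only [hS, Matrix.of_apply, if_pos this]
    exact Real.sqrt_nonneg _
  · intro j j' hjj
    have h1 : ((dIdx₁ j : Fin n₁) : ℕ) = ((dIdx₂ j : Fin n₂) : ℕ) := rfl
    have h2 : ((dIdx₁ j' : Fin n₁) : ℕ) = ((dIdx₂ j' : Fin n₂) : ℕ) := rfl
    simp only [hS, Matrix.of_apply, if_pos h1, if_pos h2, hsv]
    exact Real.sqrt_le_sqrt (lam_anti _ _ hjj)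


/-- (Existence of the t-SVDM for order-`p` tensors.)
For invertible `M₃, …, M_p`, every order-`p` real tensor `A` admits a
factorization `A = U ⋆M S ⋆M Vᵀ` with `U`, `V` `⋆M`-orthogonal and `S`
f-diagonal with nonnegative, descending transform-domain diagonal entries. -/
theorem exists_tSVDM {q : ℕ} {m : Fin q → ℕ}
    (M : ∀ k, Matrix (Fin (m k)) (Fin (m k)) ℝ) (hM : ∀ k, IsUnit (M k))
    {n₁ n₂ : ℕ} (A : TI m → Matrix (Fin n₁) (Fin n₂) ℝ) :
    ∃ (U : TI m → Matrix (Fin n₁) (Fin n₁) ℝ)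
      (S : TI m → Matrix (Fin n₁) (Fin n₂) ℝ)
      (V : TI m → Matrix (Fin n₂) (Fin n₂) ℝ), IsTSVDM M A U S V := by
  classical
  have hd : ∀ k, IsUnit (M k).det := fun k => (Matrix.isUnit_iff_isUnit_det _).mp (hM k)
  have hMinv : ∀ k, M k * (M k)⁻¹ = 1 := fun k => Matrix.mul_nonsing_inv _ (hd k)
  have hMinv' : ∀ k, (M k)⁻¹ * M k = 1 := fun k => Matrix.nonsing_inv_mul _ (hd k)
  have hu : ∀ {a b : Type} (X : TI m → Matrix a b ℝ) (i : TI m),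
      hat M (unhat M X) i = X i := fun X i =>
    comp_sum M (fun k => (M k)⁻¹) hMinv X i
  have uhh : ∀ {a b : Type} (X : TI m → Matrix a b ℝ) (i : TI m),
      unhat M (hat M X) i = X i := fun X i =>
    comp_sum (fun k => (M k)⁻¹) M hMinv' X i
  have hinj : ∀ {a b : Type} (X Y : TI m → Matrix a b ℝ),
      hat M X = hat M Y → X = Y := by
    intro a b X Y h
    funext i
    rw [← uhh X i, h, uhh]
  have key : ∀ {a b c : Type} [Fintype b] (X : TI m → Matrix a b ℝ)
      (Y : TI m → Matrix b c ℝ) (i : TI m),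
      hat M (starM M X Y) i = hat M X i * hat M Y i := by
    intro a b c _ X Y i
    exact hu _ i
  have keyT : ∀ {a b : Type} (X : TI m → Matrix a b ℝ) (i : TI m),
      hat M (transM M X) i = (hat M X i)ᵀ := fun X i => hu _ i
  choose Uh Sh Vh hUtU hUUt hVtV hVVt hdec hfd hnn hds using
    fun i => matrix_svd (hat M A i)
  refine ⟨unhat M Uh, unhat M Sh, unhat M Vh, ?_, ⟨?_, ?_⟩, ⟨?_, ?_⟩, ?_, ?_, ?_⟩
  · apply hinj
    funext i
    rw [key, key, keyT, hu, hu, hu]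
    exact hdec i
  · unfold starM idM
    exact congrArg (unhat M) (funext fun i => by rw [keyT, hu]; exact hUtU i)
  · unfold starM idM
    exact congrArg (unhat M) (funext fun i => by rw [keyT, hu]; exact hUUt i)
  · unfold starM idM
    exact congrArg (unhat M) (funext fun i => by rw [keyT, hu]; exact hVtV i)
  · unfold starM idM
    exact congrArg (unhat M) (funext fun i => by rw [keyT, hu]; exact hVVt i)
  · intro i a b hab
    rw [hu]
    exact hfd i a b hab
  · intro i j
    rw [hu]
    exact hnn i j
  · intro i j j' hjj
    rw [hu]
    exact hds i j j' hjj

end TSVDM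
end

section
/- (Ordering of singular tubes, part 2.) Let M₃,…,M_p be invertible with each M_k = c_k W_k, c_k ≠ 0 and W_k orthogonal, and let A = U ⋆M S ⋆M Vᵀ be a t-SVDM of A ∈ ℝ^{n₁×n₂×⋯×n_p} with singular tubes s_i = S(i,i,:,…,:). Then the Frobenius norms of the singular tubes are in descending order: ‖s_i‖_F ≥ ‖s_{i+1}‖_F for all 1 ≤ i < min(n₁,n₂); in particular ‖s_1‖_F ≥ ‖s_2‖_F ≥ ⋯ ≥ ‖s_r‖_F > 0 where r is the t-rank of A. -/
open Matrix

/-!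
Order-`p` real tensors (`p = q + 2`) are represented as families of frontal
slices: a tensor `A ∈ ℝ^{n₁ × n₂ × n₃ × ⋯ × n_p}` is a function
`A : TI m → Matrix (Fin n₁) (Fin n₂) ℝ`, where `TI m = ∀ k : Fin q, Fin (m k)`
is the trailing multi-index `(i₃, …, i_p)` and `A i` is the frontal slice
`A(:,:,i₃,…,i_p)`.
-/

namespace TSVDM

variable {q : ℕ} {m : Fin q → ℕ}

private lemma sum_sq_transform (M : ∀ k, Matrix (Fin (m k)) (Fin (m k)) ℝ)
    (c : Fin q → ℝ) (W : ∀ k, Matrix (Fin (m k)) (Fin (m k)) ℝ)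
    (hW : ∀ k, (W k)ᵀ * W k = 1)
    (hM : ∀ k, M k = c k • W k) (t : TI m → ℝ) :
    ∑ i : TI m, (∑ j : TI m, (∏ k, M k (i k) (j k)) * t j) ^ 2
      = (∏ k, (c k)^2) * ∑ j : TI m, (t j)^2 := by
  have hMtM : ∀ k (x y : Fin (m k)),
      (∑ z, M k z x * M k z y) = (c k)^2 * (if x = y then 1 else 0) := by
    intro k x y
    have h1 : ((M k)ᵀ * M k) x y = ∑ z, M k z x * M k z y := by
      simp [Matrix.mul_apply, Matrix.transpose_apply]
    have h2 : (M k)ᵀ * M k = ((c k)^2) • (1 : Matrix _ _ ℝ) := by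
      rw [hM, Matrix.transpose_smul, Matrix.smul_mul, Matrix.mul_smul, hW, smul_smul, sq]
    rw [← h1, h2]
    simp [Matrix.one_apply]
  have key : ∀ j j' : TI m,
      (∑ i : TI m, (∏ k, M k (i k) (j k)) * (∏ k, M k (i k) (j' k)))
        = (∏ k, (c k)^2) * (if j = j' then 1 else 0) := by
    intro j j'
    have : ∀ i : TI m, (∏ k, M k (i k) (j k)) * (∏ k, M k (i k) (j' k))
        = ∏ k, (M k (i k) (j k) * M k (i k) (j' k)) := by
      intro i; rw [← Finset.prod_mul_distrib]
    simp_rw [this]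
    rw [← Fintype.prod_sum (fun k z => M k z (j k) * M k z (j' k))]
    simp_rw [hMtM]
    rw [Finset.prod_mul_distrib]
    congr 1
    by_cases h : j = j'
    · subst h; simp
    · rw [if_neg h]
      obtain ⟨k, hk⟩ := Function.ne_iff.mp h
      exact Finset.prod_eq_zero (Finset.mem_univ k) (by simp [hk])
  calc ∑ i : TI m, (∑ j : TI m, (∏ k, M k (i k) (j k)) * t j) ^ 2
      = ∑ i : TI m, ∑ j : TI m, ∑ j' : TI m,
          ((∏ k, M k (i k) (j k)) * t j) * ((∏ k, M k (i k) (j' k)) * t j') := by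
        simp_rw [sq, Finset.sum_mul_sum]
    _ = ∑ j : TI m, ∑ j' : TI m, (t j * t j') *
          ∑ i : TI m, (∏ k, M k (i k) (j k)) * (∏ k, M k (i k) (j' k)) := by
        rw [Finset.sum_comm]
        congr 1; ext j
        rw [Finset.sum_comm]
        congr 1; ext j'
        rw [Finset.mul_sum]
        congr 1; ext i; ring
    _ = ∑ j : TI m, ∑ j' : TI m, (t j * t j') *
          ((∏ k, (c k)^2) * (if j = j' then 1 else 0)) := by simp_rw [key]
    _ = (∏ k, (c k)^2) * ∑ j : TI m, (t j)^2 := by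
        rw [Finset.mul_sum]
        congr 1; ext j
        rw [Finset.sum_eq_single j] <;> simp [sq] <;> intros <;> simp_all
        all_goals ring

/-- (Ordering of singular tubes, part 2.)
The Frobenius norms of the singular tubes are in descending order, and the
first `r` of them (where `r` is the t-rank) are positive. -/
theorem tubeNorm_descending_and_pos {q : ℕ} {m : Fin q → ℕ}
    (M : ∀ k, Matrix (Fin (m k)) (Fin (m k)) ℝ)
    (c : Fin q → ℝ) (W : ∀ k, Matrix (Fin (m k)) (Fin (m k)) ℝ)
    (hc : ∀ k, c k ≠ 0)
    (hW : ∀ k, W k * (W k)ᵀ = 1 ∧ (W k)ᵀ * W k = 1)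
    (hM : ∀ k, M k = c k • W k)
    {n₁ n₂ : ℕ} (A : TI m → Matrix (Fin n₁) (Fin n₂) ℝ)
    (U : TI m → Matrix (Fin n₁) (Fin n₁) ℝ)
    (S : TI m → Matrix (Fin n₁) (Fin n₂) ℝ)
    (V : TI m → Matrix (Fin n₂) (Fin n₂) ℝ)
    (hSVD : IsTSVDM M A U S V) (r : ℕ) (hr : HasTRank S r) :
    (∀ j j' : Fin (min n₁ n₂), j ≤ j' → tubeNorm S j' ≤ tubeNorm S j) ∧
    (∀ j : Fin (min n₁ n₂), (j : ℕ) < r → 0 < tubeNorm S j) := by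
  have hhat : ∀ (i : TI m) (a : Fin n₁) (b : Fin n₂),
      hat M S i a b = ∑ jj : TI m, (∏ k, M k (i k) (jj k)) * S jj a b := by
    intro i a b
    simp [hat, Matrix.sum_apply]
  have hCpos : (0:ℝ) < ∏ k, (c k)^2 :=
    Finset.prod_pos fun k _ => (sq_nonneg (c k)).lt_of_ne (Ne.symm (pow_ne_zero 2 (hc k)))
  have hsum : ∀ j : Fin (min n₁ n₂),
      ∑ i : TI m, (hat M S i (dIdx₁ j) (dIdx₂ j)) ^ 2
        = (∏ k, (c k)^2) * ∑ i : TI m, tube S j i ^ 2 := by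
    intro j
    simp_rw [hhat]
    exact sum_sq_transform M c W (fun k => (hW k).2) hM (tube S j)
  have hmono : ∀ j j' : Fin (min n₁ n₂), j ≤ j' →
      ∑ i : TI m, tube S j' i ^ 2 ≤ ∑ i : TI m, tube S j i ^ 2 := by
    intro j j' hjj
    have h1 : ∑ i : TI m, (hat M S i (dIdx₁ j') (dIdx₂ j')) ^ 2
        ≤ ∑ i : TI m, (hat M S i (dIdx₁ j) (dIdx₂ j)) ^ 2 := by
      apply Finset.sum_le_sum
      intro i _
      exact pow_le_pow_left₀ (hSVD.nonneg i j') (hSVD.descend i j j' hjj) 2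
    rw [hsum j, hsum j'] at h1
    exact le_of_mul_le_mul_left h1 hCpos
  constructor
  · intro j j' hjj
    exact Real.sqrt_le_sqrt (hmono j j' hjj)
  · intro j hj
    have hne : tube S j ≠ 0 := (hr j).mp hj
    obtain ⟨i, hi⟩ := Function.ne_iff.mp hne
    have : (0:ℝ) < ∑ i : TI m, tube S j i ^ 2 := by
      apply Finset.sum_pos'
      · intro i _; exact sq_nonneg _
      · exact ⟨i, Finset.mem_univ i, (sq_nonneg _).lt_of_ne (Ne.symm (pow_ne_zero 2 hi))⟩
    exact Real.sqrt_pos.mpr this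


end TSVDM
end

section
/- (Eckart–Young for higher-order ⋆M-product: error formula.) Let M₃,…,M_p be invertible with each M_k = c_k W_k, c_k ≠ 0 and W_k orthogonal, let A ∈ ℝ^{n₁×n₂×⋯×n_p} have t-SVDM A = U ⋆M S ⋆M Vᵀ with t-rank r, and for k ≤ min(n₁,n₂) let A_k = U_k ⋆M S_k ⋆M V_kᵀ be the t-rank-k truncation. Then ‖A − A_k‖_F² = Σ_{i=k+1}^{r} ‖s_i‖_F², where s_i = S(i,i,:,…,:) is the (i,i)-singular tube of S. -/
open Matrix

/-!
Order-`p` real tensors (`p = q + 2`) are represented as families of frontal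
slices: a tensor `A ∈ ℝ^{n₁ × n₂ × n₃ × ⋯ × n_p}` is a function
`A : TI m → Matrix (Fin n₁) (Fin n₂) ℝ`, where `TI m = ∀ k : Fin q, Fin (m k)`
is the trailing multi-index `(i₃, …, i_p)` and `A i` is the frontal slice
`A(:,:,i₃,…,i_p)`.
-/

namespace TSVDM

variable {q : ℕ} {m : Fin q → ℕ}

variable {q : ℕ} {m : Fin q → ℕ}


lemma hat_apply (M : ∀ k, Matrix (Fin (m k)) (Fin (m k)) ℝ) {a b : Type}
    (A : TI m → Matrix a b ℝ) (i : TI m) (r : a) (c : b) :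
    hat M A i r c = ∑ j : TI m, (∏ k, M k (i k) (j k)) * A j r c := by
  simp [hat, Matrix.sum_apply]

lemma unhat_apply (M : ∀ k, Matrix (Fin (m k)) (Fin (m k)) ℝ) {a b : Type}
    (A : TI m → Matrix a b ℝ) (i : TI m) (r : a) (c : b) :
    unhat M A i r c = ∑ j : TI m, (∏ k, (M k)⁻¹ (i k) (j k)) * A j r c := by
  simp [unhat, Matrix.sum_apply]

lemma sum_prod_mul (P Q : ∀ k, Matrix (Fin (m k)) (Fin (m k)) ℝ) (i l : TI m) :
    ∑ j : TI m, (∏ k, P k (i k) (j k)) * (∏ k, Q k (j k) (l k))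
      = ∏ k, (P k * Q k) (i k) (l k) := by
  calc ∑ j : TI m, (∏ k, P k (i k) (j k)) * (∏ k, Q k (j k) (l k))
      = ∑ j : TI m, ∏ k, P k (i k) (j k) * Q k (j k) (l k) := by
        simp [Finset.prod_mul_distrib]
    _ = ∏ k, ∑ x : Fin (m k), P k (i k) x * Q k x (l k) := by
        rw [Finset.prod_univ_sum]
        rw [Fintype.piFinset_univ]
    _ = ∏ k, (P k * Q k) (i k) (l k) := by simp [Matrix.mul_apply]

lemma prod_one_apply (i l : TI m) :
    (∏ k, (1 : Matrix (Fin (m k)) (Fin (m k)) ℝ) (i k) (l k)) = if i = l then 1 else 0 := by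
  by_cases h : i = l
  · subst h; simp [Matrix.one_apply]
  · obtain ⟨k, hk⟩ := Function.ne_iff.mp h
    rw [if_neg h]
    apply Finset.prod_eq_zero (Finset.mem_univ k)
    simp [Matrix.one_apply, hk]
lemma hat_unhat (M : ∀ k, Matrix (Fin (m k)) (Fin (m k)) ℝ)
    (hMr : ∀ k, M k * (M k)⁻¹ = 1) {a b : Type}
    (A : TI m → Matrix a b ℝ) : hat M (unhat M A) = A := by
  funext i; ext r c
  rw [hat_apply]
  simp only [unhat_apply]
  calc ∑ j : TI m, (∏ k, M k (i k) (j k)) * ∑ l : TI m, (∏ k, (M k)⁻¹ (j k) (l k)) * A l r c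
      = ∑ l : TI m, (∑ j : TI m, (∏ k, M k (i k) (j k)) * (∏ k, (M k)⁻¹ (j k) (l k))) * A l r c := by
        simp_rw [Finset.mul_sum, Finset.sum_mul]
        rw [Finset.sum_comm]
        apply Finset.sum_congr rfl; intro l _
        apply Finset.sum_congr rfl; intro j _
        ring
    _ = A i r c := by
        simp_rw [sum_prod_mul, hMr, prod_one_apply, ite_mul, one_mul, zero_mul,
          Finset.sum_ite_eq, Finset.mem_univ, if_pos]

lemma hat_starM (M : ∀ k, Matrix (Fin (m k)) (Fin (m k)) ℝ)
    (hMr : ∀ k, M k * (M k)⁻¹ = 1) {a b c : Type} [Fintype b]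
    (A : TI m → Matrix a b ℝ) (B : TI m → Matrix b c ℝ) :
    hat M (starM M A B) = fun i => hat M A i * hat M B i := by
  unfold starM; rw [hat_unhat M hMr]

lemma hat_transM (M : ∀ k, Matrix (Fin (m k)) (Fin (m k)) ℝ)
    (hMr : ∀ k, M k * (M k)⁻¹ = 1) {a b : Type}
    (A : TI m → Matrix a b ℝ) :
    hat M (transM M A) = fun i => (hat M A i)ᵀ := by
  unfold transM; rw [hat_unhat M hMr]

lemma hat_idM (M : ∀ k, Matrix (Fin (m k)) (Fin (m k)) ℝ)
    (hMr : ∀ k, M k * (M k)⁻¹ = 1) {a : Type} [DecidableEq a] :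
    hat M (idM M a) = fun _ => (1 : Matrix a a ℝ) := by
  unfold idM; rw [hat_unhat M hMr]

lemma hat_sub (M : ∀ k, Matrix (Fin (m k)) (Fin (m k)) ℝ) {a b : Type}
    (A B : TI m → Matrix a b ℝ) :
    hat M (A - B) = fun i => hat M A i - hat M B i := by
  funext i; simp [hat, smul_sub, Finset.sum_sub_distrib]
noncomputable def frobSq {a b : Type} [Fintype a] [Fintype b] (X : Matrix a b ℝ) : ℝ :=
  ∑ r : a, ∑ c : b, X r c ^ 2

lemma frobSq_eq_trace {a b : Type} [Fintype a] [Fintype b] (X : Matrix a b ℝ) :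
    frobSq X = Matrix.trace (X * Xᵀ) := by
  simp [frobSq, Matrix.trace, Matrix.mul_apply, Matrix.diag, sq]

lemma frobSq_conj {n₁ n₂ : ℕ} (P : Matrix (Fin n₁) (Fin n₁) ℝ) (Q : Matrix (Fin n₂) (Fin n₂) ℝ)
    (X : Matrix (Fin n₁) (Fin n₂) ℝ) (hP : Pᵀ * P = 1) (hQ : Qᵀ * Q = 1) :
    frobSq (P * X * Qᵀ) = frobSq X := by
  rw [frobSq_eq_trace, frobSq_eq_trace]
  have e1 : (P * X * Qᵀ)ᵀ = Q * (Xᵀ * Pᵀ) := by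
    simp [Matrix.transpose_mul, Matrix.mul_assoc]
  have h1 : P * X * Qᵀ * (P * X * Qᵀ)ᵀ = P * (X * Xᵀ) * Pᵀ := by
    rw [e1, Matrix.mul_assoc (P * X) Qᵀ, ← Matrix.mul_assoc Qᵀ Q, hQ, Matrix.one_mul,
      ← Matrix.mul_assoc (P * X) Xᵀ, Matrix.mul_assoc P X Xᵀ]
  rw [h1, Matrix.trace_mul_comm (P * (X * Xᵀ)) Pᵀ, ← Matrix.mul_assoc, Matrix.mul_assoc Pᵀ,
    ← Matrix.mul_assoc Pᵀ P, hP, Matrix.one_mul]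

def rdiag {n₁ n₂ : ℕ} (d : Fin (min n₁ n₂) → ℝ) : Matrix (Fin n₁) (Fin n₂) ℝ :=
  Matrix.of fun a b =>
    if h : (a : ℕ) = (b : ℕ) ∧ (a : ℕ) < min n₁ n₂ then d ⟨a, h.2⟩ else 0

lemma rdiag_diag {n₁ n₂ : ℕ} (d : Fin (min n₁ n₂) → ℝ) (j : Fin (min n₁ n₂)) :
    rdiag d (dIdx₁ j) (dIdx₂ j) = d j := by
  have hcond : ((dIdx₁ j : Fin n₁) : ℕ) = ((dIdx₂ j : Fin n₂) : ℕ) ∧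
      ((dIdx₁ j : Fin n₁) : ℕ) < min n₁ n₂ := ⟨rfl, j.2⟩
  simp only [rdiag, Matrix.of_apply]
  rw [dif_pos hcond]
  exact congrArg d (Fin.val_inj.mp rfl)

lemma rdiag_ne {n₁ n₂ : ℕ} (d : Fin (min n₁ n₂) → ℝ) {a : Fin n₁} {b : Fin n₂}
    (h : ∀ j : Fin (min n₁ n₂), ¬(a = dIdx₁ j ∧ b = dIdx₂ j)) :
    rdiag d a b = 0 := by
  simp only [rdiag, Matrix.of_apply]
  rw [dif_neg]
  rintro ⟨h1, h2⟩
  exact h ⟨(a : ℕ), h2⟩ ⟨Fin.val_inj.mp rfl, Fin.val_inj.mp h1.symm⟩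

lemma sum_pair_rdiag {n₁ n₂ : ℕ} (d : Fin (min n₁ n₂) → ℝ) (g : Fin n₁ → Fin n₂ → ℝ) :
    (∑ a : Fin n₁, ∑ b : Fin n₂, rdiag d a b * g a b)
      = ∑ j : Fin (min n₁ n₂), d j * g (dIdx₁ j) (dIdx₂ j) := by
  classical
  have hinj : Function.Injective
      (fun j : Fin (min n₁ n₂) => ((dIdx₁ j, dIdx₂ j) : Fin n₁ × Fin n₂)) := by
    intro j j' h
    exact Fin.val_inj.mp (congrArg (fun p : Fin n₁ × Fin n₂ => (p.1 : ℕ)) h)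
  set e : Fin (min n₁ n₂) ↪ Fin n₁ × Fin n₂ := ⟨_, hinj⟩ with he
  have hzero : ∀ x ∈ (Finset.univ : Finset (Fin n₁ × Fin n₂)),
      x ∉ Finset.univ.map e → rdiag d x.1 x.2 * g x.1 x.2 = 0 := by
    intro x _ hx
    have : rdiag d x.1 x.2 = 0 := by
      apply rdiag_ne
      intro j hj
      apply hx
      rw [Finset.mem_map]
      exact ⟨j, Finset.mem_univ _, by rw [he]; exact (Prod.ext hj.1.symm hj.2.symm)⟩
    rw [this, zero_mul]
  rw [← Finset.sum_product', Finset.univ_product_univ,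
    ← Finset.sum_subset (Finset.subset_univ (Finset.univ.map e)) hzero, Finset.sum_map]
  simp [he, rdiag_diag]
lemma frobSq_rdiag {n₁ n₂ : ℕ} (d : Fin (min n₁ n₂) → ℝ) :
    frobSq (rdiag d) = ∑ j : Fin (min n₁ n₂), d j ^ 2 := by
  have := sum_pair_rdiag d (fun a b => rdiag d a b)
  simp only [rdiag_diag] at this
  simpa [frobSq, sq] using this

lemma rdiag_sub {n₁ n₂ : ℕ} (d d' : Fin (min n₁ n₂) → ℝ) :
    rdiag d - rdiag d' = rdiag (fun j => d j - d' j) := by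
  ext a b
  simp only [Matrix.sub_apply, rdiag, Matrix.of_apply]
  by_cases h : (a : ℕ) = (b : ℕ) ∧ (a : ℕ) < min n₁ n₂
  · rw [dif_pos h, dif_pos h, dif_pos h]
  · rw [dif_neg h, dif_neg h, dif_neg h, sub_zero]

lemma mul_rdiag_mul {n₁ n₂ : ℕ} (P : Matrix (Fin n₁) (Fin n₁) ℝ)
    (Q : Matrix (Fin n₂) (Fin n₂) ℝ) (d : Fin (min n₁ n₂) → ℝ) (r : Fin n₁) (c : Fin n₂) :
    (P * rdiag d * Qᵀ) r c
      = ∑ j : Fin (min n₁ n₂), d j * (P r (dIdx₁ j) * Q c (dIdx₂ j)) := by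
  rw [← sum_pair_rdiag d (fun a b => P r a * Q c b)]
  simp only [Matrix.mul_apply, Matrix.transpose_apply, Finset.sum_mul]
  rw [Finset.sum_comm]
  apply Finset.sum_congr rfl; intro a _
  apply Finset.sum_congr rfl; intro b _
  ring

lemma sum_castLE {N kk : ℕ} (h : kk ≤ N) (g : Fin N → ℝ) :
    ∑ j : Fin N, (if (j : ℕ) < kk then g j else 0) = ∑ a : Fin kk, g (Fin.castLE h a) := by
  classical
  rw [← Finset.sum_filter]
  have : Finset.univ.filter (fun j : Fin N => (j : ℕ) < kk)
      = Finset.univ.map (Fin.castLEEmb h) := by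
    ext x
    simp only [Finset.mem_filter, Finset.mem_univ, true_and, Finset.mem_map,
      Fin.castLEEmb, Function.Embedding.coeFn_mk]
    constructor
    · intro hx; exact ⟨⟨(x : ℕ), hx⟩, Fin.val_inj.mp rfl⟩
    · rintro ⟨a, -, rfl⟩; exact a.2
  rw [this, Finset.sum_map]
  rfl
lemma rdiag_castLE {n₁ n₂ kk : ℕ} (hk : kk ≤ min n₁ n₂) (h₁ : kk ≤ n₁) (h₂ : kk ≤ n₂)
    (d : Fin (min n₁ n₂) → ℝ) (a b : Fin kk) :
    rdiag d (Fin.castLE h₁ a) (Fin.castLE h₂ b)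
      = if a = b then d (Fin.castLE hk a) else 0 := by
  by_cases hab : a = b
  · subst hab
    rw [if_pos rfl]
    have e1 : dIdx₁ (Fin.castLE hk a) = Fin.castLE h₁ a := Fin.val_inj.mp rfl
    have e2 : dIdx₂ (Fin.castLE hk a) = Fin.castLE h₂ a := Fin.val_inj.mp rfl
    rw [← e1, ← e2, rdiag_diag]
  · rw [if_neg hab]
    simp only [rdiag, Matrix.of_apply]
    rw [dif_neg]
    rintro ⟨h1, -⟩
    exact hab (Fin.val_inj.mp h1)

lemma trunc_sandwich {n₁ n₂ kk : ℕ} (hk : kk ≤ min n₁ n₂)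
    (h₁ : kk ≤ n₁) (h₂ : kk ≤ n₂)
    (P : Matrix (Fin n₁) (Fin n₁) ℝ) (Q : Matrix (Fin n₂) (Fin n₂) ℝ)
    (d : Fin (min n₁ n₂) → ℝ) :
    (Matrix.of fun (r : Fin n₁) (c : Fin kk) => P r (Fin.castLE h₁ c)) *
      (Matrix.of fun (a b : Fin kk) => rdiag d (Fin.castLE h₁ a) (Fin.castLE h₂ b)) *
      (Matrix.of fun (r : Fin n₂) (c : Fin kk) => Q r (Fin.castLE h₂ c))ᵀ
    = P * rdiag (fun j => if (j : ℕ) < kk then d j else 0) * Qᵀ := by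
  ext r c
  rw [mul_rdiag_mul]
  have hrhs : ∑ j : Fin (min n₁ n₂),
        (if (j : ℕ) < kk then d j else 0) * (P r (dIdx₁ j) * Q c (dIdx₂ j))
      = ∑ j : Fin (min n₁ n₂),
        (if (j : ℕ) < kk then d j * (P r (dIdx₁ j) * Q c (dIdx₂ j)) else 0) := by
    apply Finset.sum_congr rfl; intro j _; rw [ite_mul, zero_mul]
  rw [hrhs, sum_castLE hk]
  simp only [Matrix.mul_apply, Matrix.transpose_apply, Matrix.of_apply,
    rdiag_castLE hk h₁ h₂, mul_ite, ite_mul, mul_zero, zero_mul]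
  simp only [Finset.sum_ite_eq', Finset.mem_univ, if_pos]
  apply Finset.sum_congr rfl; intro a _
  have e1 : dIdx₁ (Fin.castLE hk a) = Fin.castLE h₁ a := Fin.val_inj.mp rfl
  have e2 : dIdx₂ (Fin.castLE hk a) = Fin.castLE h₂ a := Fin.val_inj.mp rfl
  rw [e1, e2]; ring

lemma hat_truncCols (M : ∀ k, Matrix (Fin (m k)) (Fin (m k)) ℝ) {n kk : ℕ} (h : kk ≤ n)
    {a : Type} (U : TI m → Matrix a (Fin n) ℝ) :
    hat M (truncCols h U) = truncCols h (hat M U) := by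
  funext i; ext r c
  simp [hat_apply, truncCols]

lemma hat_truncBlock (M : ∀ k, Matrix (Fin (m k)) (Fin (m k)) ℝ) {n₁ n₂ kk : ℕ}
    (h₁ : kk ≤ n₁) (h₂ : kk ≤ n₂) (S : TI m → Matrix (Fin n₁) (Fin n₂) ℝ) :
    hat M (truncBlock h₁ h₂ S) = truncBlock h₁ h₂ (hat M S) := by
  funext i; ext r c
  simp [hat_apply, truncBlock]
lemma parseval_scalar (M : ∀ k, Matrix (Fin (m k)) (Fin (m k)) ℝ)
    (c : Fin q → ℝ) (hMTM : ∀ k, (M k)ᵀ * M k = ((c k) ^ 2) • 1)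
    (f : TI m → ℝ) :
    ∑ i : TI m, (∑ j : TI m, (∏ k, M k (i k) (j k)) * f j) ^ 2
      = (∏ k, (c k) ^ 2) * ∑ j : TI m, f j ^ 2 := by
  have key : ∀ j j' : TI m,
      (∑ i : TI m, (∏ k, M k (i k) (j k)) * (∏ k, M k (i k) (j' k)))
        = (∏ k, (c k) ^ 2) * (if j = j' then 1 else 0) := by
    intro j j'
    calc ∑ i : TI m, (∏ k, M k (i k) (j k)) * (∏ k, M k (i k) (j' k))
        = ∑ i : TI m, (∏ k, (M k)ᵀ (j k) (i k)) * (∏ k, M k (i k) (j' k)) := by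
          simp [Matrix.transpose_apply]
      _ = ∏ k, ((M k)ᵀ * M k) (j k) (j' k) := sum_prod_mul _ _ _ _
      _ = ∏ k, (((c k) ^ 2) • (1 : Matrix (Fin (m k)) (Fin (m k)) ℝ)) (j k) (j' k) := by
          simp_rw [hMTM]
      _ = (∏ k, (c k) ^ 2) * ∏ k, (1 : Matrix (Fin (m k)) (Fin (m k)) ℝ) (j k) (j' k) := by
          simp [Matrix.smul_apply, Finset.prod_mul_distrib]
      _ = (∏ k, (c k) ^ 2) * (if j = j' then 1 else 0) := by rw [prod_one_apply]
  calc ∑ i : TI m, (∑ j : TI m, (∏ k, M k (i k) (j k)) * f j) ^ 2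
      = ∑ i : TI m, ∑ j : TI m, ∑ j' : TI m,
          ((∏ k, M k (i k) (j k)) * f j) * ((∏ k, M k (i k) (j' k)) * f j') := by
        simp [sq, Finset.sum_mul_sum]
    _ = ∑ j : TI m, ∑ j' : TI m,
          (∑ i : TI m, (∏ k, M k (i k) (j k)) * (∏ k, M k (i k) (j' k))) * (f j * f j') := by
        rw [Finset.sum_comm]
        apply Finset.sum_congr rfl; intro j _
        rw [Finset.sum_comm]
        apply Finset.sum_congr rfl; intro j' _
        rw [Finset.sum_mul]
        apply Finset.sum_congr rfl; intro i _
        ring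
    _ = ∑ j : TI m, ∑ j' : TI m,
          ((∏ k, (c k) ^ 2) * (if j = j' then 1 else 0)) * (f j * f j') := by
        simp_rw [key]
    _ = (∏ k, (c k) ^ 2) * ∑ j : TI m, f j ^ 2 := by
        simp [mul_ite, ite_mul, zero_mul, mul_zero, Finset.sum_ite_eq, Finset.mul_sum, sq]

lemma parseval (M : ∀ k, Matrix (Fin (m k)) (Fin (m k)) ℝ)
    (c : Fin q → ℝ) (hMTM : ∀ k, (M k)ᵀ * M k = ((c k) ^ 2) • 1)
    {a b : Type} [Fintype a] [Fintype b] (A : TI m → Matrix a b ℝ) :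
    ∑ i : TI m, frobSq (hat M A i) = (∏ k, (c k) ^ 2) * ∑ i : TI m, frobSq (A i) := by
  simp only [frobSq, hat_apply]
  have swap : ∀ f : TI m → a → b → ℝ, ∑ i : TI m, ∑ r : a, ∑ cc : b, f i r cc
      = ∑ r : a, ∑ cc : b, ∑ i : TI m, f i r cc := by
    intro f
    rw [Finset.sum_comm]
    exact Finset.sum_congr rfl fun r _ => Finset.sum_comm
  rw [swap (fun i r cc => (∑ j : TI m, (∏ k, M k (i k) (j k)) * A j r cc) ^ 2),
    swap (fun i r cc => A i r cc ^ 2), Finset.mul_sum]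
  apply Finset.sum_congr rfl; intro r _
  rw [Finset.mul_sum]
  apply Finset.sum_congr rfl; intro cc _
  exact parseval_scalar M c hMTM (fun j => A j r cc)

/-- (Eckart–Young for the higher-order `⋆M`-product: error formula.)
`‖A − A_k‖_F² = Σ_{i=k+1}^{r} ‖s_i‖_F²`, where `A_k` is the t-rank-`k` truncation. -/
theorem truncApprox_error_formula {q : ℕ} {m : Fin q → ℕ}
    (M : ∀ k, Matrix (Fin (m k)) (Fin (m k)) ℝ)
    (c : Fin q → ℝ) (W : ∀ k, Matrix (Fin (m k)) (Fin (m k)) ℝ)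
    (hc : ∀ k, c k ≠ 0)
    (hW : ∀ k, W k * (W k)ᵀ = 1 ∧ (W k)ᵀ * W k = 1)
    (hM : ∀ k, M k = c k • W k)
    {n₁ n₂ : ℕ} (A : TI m → Matrix (Fin n₁) (Fin n₂) ℝ)
    (U : TI m → Matrix (Fin n₁) (Fin n₁) ℝ)
    (S : TI m → Matrix (Fin n₁) (Fin n₂) ℝ)
    (V : TI m → Matrix (Fin n₂) (Fin n₂) ℝ)
    (hSVD : IsTSVDM M A U S V) (r : ℕ) (hr : HasTRank S r)
    (k : ℕ) (hk : k ≤ min n₁ n₂) :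
    frob (A - truncApprox M U S V k hk) ^ 2 =
      ∑ j ∈ Finset.univ.filter (fun j : Fin (min n₁ n₂) => k ≤ (j : ℕ) ∧ (j : ℕ) < r),
        tubeNorm S j ^ 2 := by
  classical
  have hMr : ∀ k, M k * (M k)⁻¹ = 1 := by
    intro k
    have hinv : M k * ((c k)⁻¹ • (W k)ᵀ) = 1 := by
      rw [hM k, Matrix.smul_mul, Matrix.mul_smul, smul_smul, (hW k).1,
        mul_inv_cancel₀ (hc k), one_smul]
    rw [Matrix.inv_eq_right_inv hinv]
    exact hinv
  have hMTM : ∀ k, (M k)ᵀ * M k = ((c k) ^ 2) • (1 : Matrix (Fin (m k)) (Fin (m k)) ℝ) := by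
    intro k
    rw [hM k, Matrix.transpose_smul, Matrix.smul_mul, Matrix.mul_smul, (hW k).2, smul_smul, sq]
  set C : ℝ := ∏ k, (c k) ^ 2 with hCdef
  have hC : C ≠ 0 := by
    rw [hCdef]
    exact Finset.prod_ne_zero_iff.mpr fun k _ => pow_ne_zero 2 (hc k)
  -- orthogonality of transform-domain slices
  have hUo : ∀ i, (hat M U i)ᵀ * hat M U i = 1 := by
    intro i
    have h1 := congrArg (hat M) hSVD.orthU.1
    rw [hat_starM M hMr, hat_transM M hMr, hat_idM M hMr] at h1
    exact congrFun h1 i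
  have hVo : ∀ i, (hat M V i)ᵀ * hat M V i = 1 := by
    intro i
    have h1 := congrArg (hat M) hSVD.orthV.1
    rw [hat_starM M hMr, hat_transM M hMr, hat_idM M hMr] at h1
    exact congrFun h1 i
  set D : TI m → Fin (min n₁ n₂) → ℝ := fun i j => hat M S i (dIdx₁ j) (dIdx₂ j) with hD
  have hS : ∀ i, hat M S i = rdiag (D i) := by
    intro i
    ext a b
    by_cases hab : (a : ℕ) = (b : ℕ)
    · have hlt : (a : ℕ) < min n₁ n₂ := lt_min a.2 (hab ▸ b.2)
      have ea : dIdx₁ (⟨(a : ℕ), hlt⟩ : Fin (min n₁ n₂)) = a := Fin.val_inj.mp rfl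
      have eb : dIdx₂ (⟨(a : ℕ), hlt⟩ : Fin (min n₁ n₂)) = b := Fin.val_inj.mp hab
      rw [← ea, ← eb, rdiag_diag]
    · rw [hSVD.fdiag i a b hab]
      refine (rdiag_ne _ fun j hj => ?_).symm
      exact hab (by rw [hj.1, hj.2]; rfl)
  have hA : ∀ i, hat M A i = hat M U i * rdiag (D i) * (hat M V i)ᵀ := by
    intro i
    have h1 := congrArg (hat M) hSVD.decomp
    rw [hat_starM M hMr, hat_starM M hMr, hat_transM M hMr] at h1
    rw [congrFun h1 i]
    simp only [hS]
  have hAk : ∀ i, hat M (truncApprox M U S V k hk) i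
      = hat M U i * rdiag (fun j => if (j : ℕ) < k then D i j else 0) * (hat M V i)ᵀ := by
    intro i
    unfold truncApprox
    rw [show hat M (starM M
        (starM M (truncCols (le_trans hk (Nat.min_le_left n₁ n₂)) U)
          (truncBlock (le_trans hk (Nat.min_le_left n₁ n₂)) (le_trans hk (Nat.min_le_right n₁ n₂)) S))
        (transM M (truncCols (le_trans hk (Nat.min_le_right n₁ n₂)) V))) i
      = (hat M (truncCols (le_trans hk (Nat.min_le_left n₁ n₂)) U) i *
          hat M (truncBlock (le_trans hk (Nat.min_le_left n₁ n₂)) (le_trans hk (Nat.min_le_right n₁ n₂)) S) i) *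
          (hat M (truncCols (le_trans hk (Nat.min_le_right n₁ n₂)) V) i)ᵀ from by
        rw [hat_starM M hMr, hat_starM M hMr, hat_transM M hMr]]
    rw [hat_truncCols, hat_truncCols, hat_truncBlock]
    have := trunc_sandwich hk (le_trans hk (Nat.min_le_left n₁ n₂))
      (le_trans hk (Nat.min_le_right n₁ n₂)) (hat M U i) (hat M V i) (D i)
    rw [← this]
    simp only [truncCols, truncBlock, hS i]
  have hdiff : ∀ i, hat M (A - truncApprox M U S V k hk) i
      = hat M U i * rdiag (fun j => if (j : ℕ) < k then 0 else D i j) * (hat M V i)ᵀ := by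
    intro i
    rw [hat_sub]
    show hat M A i - hat M (truncApprox M U S V k hk) i = _
    rw [hA i, hAk i, ← Matrix.sub_mul, ← Matrix.mul_sub, rdiag_sub]
    have harg : (fun j : Fin (min n₁ n₂) => D i j - if (j : ℕ) < k then D i j else 0)
        = fun j : Fin (min n₁ n₂) => if (j : ℕ) < k then 0 else D i j := by
      funext j
      by_cases hj : (j : ℕ) < k <;> simp [hj]
    rw [harg]
  have hslice : ∀ i, frobSq (hat M (A - truncApprox M U S V k hk) i)
      = ∑ j : Fin (min n₁ n₂), (if (j : ℕ) < k then 0 else D i j ^ 2) := by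
    intro i
    rw [hdiff i, frobSq_conj _ _ _ (hUo i) (hVo i), frobSq_rdiag]
    apply Finset.sum_congr rfl; intro j _
    by_cases hj : (j : ℕ) < k <;> simp [hj]
  have htube : ∀ j, ∑ i : TI m, D i j ^ 2 = C * ∑ i : TI m, tube S j i ^ 2 := by
    intro j
    rw [← parseval_scalar M c hMTM (tube S j)]
    apply Finset.sum_congr rfl; intro i _
    congr 1
    show hat M S i (dIdx₁ j) (dIdx₂ j) = _
    rw [hat_apply]
    rfl
  have main : (∑ i : TI m, frobSq ((A - truncApprox M U S V k hk) i))
      = ∑ j ∈ Finset.univ.filter (fun j : Fin (min n₁ n₂) => k ≤ (j : ℕ)),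
          ∑ i : TI m, tube S j i ^ 2 := by
    apply mul_left_cancel₀ hC
    rw [← parseval M c hMTM]
    calc ∑ i : TI m, frobSq (hat M (A - truncApprox M U S V k hk) i)
        = ∑ i : TI m, ∑ j : Fin (min n₁ n₂), (if (j : ℕ) < k then 0 else D i j ^ 2) :=
          Finset.sum_congr rfl fun i _ => hslice i
      _ = ∑ j : Fin (min n₁ n₂), (if (j : ℕ) < k then 0 else ∑ i : TI m, D i j ^ 2) := by
          rw [Finset.sum_comm]
          apply Finset.sum_congr rfl; intro j _
          by_cases hj : (j : ℕ) < k <;> simp [hj]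
      _ = ∑ j : Fin (min n₁ n₂), (if (j : ℕ) < k then 0 else C * ∑ i : TI m, tube S j i ^ 2) := by
          simp_rw [htube]
      _ = C * ∑ j ∈ Finset.univ.filter (fun j : Fin (min n₁ n₂) => k ≤ (j : ℕ)),
            ∑ i : TI m, tube S j i ^ 2 := by
          rw [Finset.mul_sum, Finset.sum_filter]
          apply Finset.sum_congr rfl; intro j _
          by_cases hj : (j : ℕ) < k
          · rw [if_pos hj, if_neg (by omega)]
          · rw [if_neg hj, if_pos (by omega)]
  have hfrob : frob (A - truncApprox M U S V k hk) ^ 2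
      = ∑ i : TI m, frobSq ((A - truncApprox M U S V k hk) i) := by
    rw [frob, Real.sq_sqrt (by positivity)]
    rfl
  have hfilter : ∑ j ∈ Finset.univ.filter
        (fun j : Fin (min n₁ n₂) => k ≤ (j : ℕ) ∧ (j : ℕ) < r), tubeNorm S j ^ 2
      = ∑ j ∈ Finset.univ.filter (fun j : Fin (min n₁ n₂) => k ≤ (j : ℕ)), tubeNorm S j ^ 2 := by
    apply Finset.sum_subset
    · intro x hx
      simp only [Finset.mem_filter, Finset.mem_univ, true_and] at hx ⊢
      exact hx.1
    · intro x hx hnx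
      simp only [Finset.mem_filter, Finset.mem_univ, true_and] at hx hnx
      have h0 : tube S x = 0 := by
        by_contra hne
        exact hnx ⟨hx, (hr x).mpr hne⟩
      simp [tubeNorm, h0]
  have htn : ∀ j : Fin (min n₁ n₂), tubeNorm S j ^ 2 = ∑ i : TI m, tube S j i ^ 2 := by
    intro j
    rw [tubeNorm, Real.sq_sqrt (by positivity)]
  rw [hfrob, main, hfilter]
  exact Finset.sum_congr rfl fun j _ => (htn j).symm

end TSVDM
end
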